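/- arXiv:1803.05857 — 2 statements merged into one kernel-verified Lean document; each statement's English description precedes it below -/
import Mathlib

section
/- Let N, l, m be positive integers with l ≤ N − 1, N ≠ 2l and 1 ≤ m ≤ N. Then for any real number K with K > √N/2, E[exp((Ũ_l(m,N))²/K²)] ≤ 1 + 8eNK²/(4K² − N)². -/
open MeasureTheory ProbabilityTheory Finset

section Aux

lemma aux_hoeffding (p : ℝ) (hp0 : 0 ≤ p) (hp1 : p ≤ 1) (x : ℝ) :
    1 - p + p * Real.exp x ≤ Real.exp (p * x + x ^ 2 / 8) := by
  set D : ℝ → ℝ := fun y => 1 - p + p * Real.exp y with hDdef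
  have hD : ∀ y, 0 < D y := by
    intro y
    rcases eq_or_lt_of_le hp1 with h | h
    · simp [hDdef, h, Real.exp_pos]
    · have := mul_nonneg hp0 (Real.exp_pos y).le
      simp only [hDdef]; linarith
  have hDd : ∀ y, HasDerivAt D (p * Real.exp y) y := fun y =>
    ((Real.hasDerivAt_exp y).const_mul p).const_add (1 - p)
  set q : ℝ → ℝ := fun y => p * Real.exp y / D y with hqdef
  have hq0 : ∀ y, 0 ≤ q y := fun y =>
    div_nonneg (mul_nonneg hp0 (Real.exp_pos y).le) (hD y).le
  have hq1 : ∀ y, q y ≤ 1 := by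
    intro y
    rw [hqdef, div_le_one (hD y)]
    simp only [hDdef]
    linarith
  have hqd : ∀ y, HasDerivAt q (q y * (1 - q y)) y := by
    intro y
    have h := ((Real.hasDerivAt_exp y).const_mul p).div (hDd y) (hD y).ne'
    refine h.congr_deriv ?_
    have := (hD y).ne'
    simp only [hqdef]
    field_simp
  set g' : ℝ → ℝ := fun y => p + y / 4 - q y with hg'def
  have hg'd : ∀ y, HasDerivAt g' (1 / 4 - q y * (1 - q y)) y := by
    intro y
    have h : HasDerivAt (fun y : ℝ => p + y / 4) (1 / 4) y := by
      simpa using ((hasDerivAt_id y).div_const 4).const_add p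
    exact h.sub (hqd y)
  have hmono : Monotone g' := by
    apply monotone_of_deriv_nonneg
    · exact fun y => (hg'd y).differentiableAt
    · intro y
      rw [(hg'd y).deriv]
      nlinarith [hq0 y, hq1 y, sq_nonneg (2 * q y - 1)]
  have hg'0 : g' 0 = 0 := by
    simp [hg'def, hqdef, hDdef]
  set g : ℝ → ℝ := fun y => p * y + y ^ 2 / 8 - Real.log (D y) with hgdef
  have hgd : ∀ y, HasDerivAt g (g' y) y := by
    intro y
    have h1 : HasDerivAt (fun y : ℝ => p * y + y ^ 2 / 8) (p + y / 4) y := by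
      have := ((hasDerivAt_pow 2 y).div_const 8).const_add (p * y)
      have h2 := ((hasDerivAt_id y).const_mul p).add ((hasDerivAt_pow 2 y).div_const 8)
      exact h2.congr_deriv (by norm_num; ring)
    have h2 := (hDd y).log (hD y).ne'
    exact (h1.sub h2).congr_deriv (by simp [hg'def, hqdef])
  have hg0 : g 0 = 0 := by simp [hgdef, hDdef]
  have key : ∀ y, 0 ≤ g y := by
    intro y
    rcases le_total 0 y with hy | hy
    · have hmg : MonotoneOn g (Set.Ici (0 : ℝ)) := by
        apply monotoneOn_of_deriv_nonneg (convex_Ici 0)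
        · exact (Continuous.continuousOn (by
            have : ∀ z, DifferentiableAt ℝ g z := fun z => (hgd z).differentiableAt
            exact Differentiable.continuous this))
        · intro z hz
          exact (hgd z).differentiableAt.differentiableWithinAt
        · intro z hz
          rw [(hgd z).deriv]
          rw [← hg'0]
          exact hmono (le_of_lt (by simpa using hz))
      have := hmg (Set.self_mem_Ici) (Set.mem_Ici.2 hy) hy
      linarith [hg0 ▸ this]
    · have hmg : AntitoneOn g (Set.Iic (0 : ℝ)) := by
        apply antitoneOn_of_deriv_nonpos (convex_Iic 0)
        · exact (Continuous.continuousOn (by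
            have : ∀ z, DifferentiableAt ℝ g z := fun z => (hgd z).differentiableAt
            exact Differentiable.continuous this))
        · intro z hz
          exact (hgd z).differentiableAt.differentiableWithinAt
        · intro z hz
          rw [(hgd z).deriv]
          rw [← hg'0]
          exact hmono (le_of_lt (by simpa using hz))
      have := hmg (Set.mem_Iic.2 hy) (Set.self_mem_Iic) hy
      linarith [hg0 ▸ this]
  have hx := key x
  have : Real.log (D x) ≤ p * x + x ^ 2 / 8 := by simp only [hgdef] at hx; linarith
  have := (Real.log_le_iff_le_exp (hD x)).mp this
  simpa [hDdef] using this


lemma aux_cos_sum (N j : ℕ) (hN : 0 < N) (hj : ¬ (N ∣ j)) :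
    ∑ n ∈ Finset.Icc 1 N, Real.cos (2 * Real.pi * n * j / N) = 0 := by
  set θ : ℝ := 2 * Real.pi * j / N with hθ
  set ζ : ℂ := Complex.exp (θ * Complex.I) with hζ
  have hNne : (N : ℝ) ≠ 0 := Nat.cast_ne_zero.mpr hN.ne'
  have hζ1 : ζ ≠ 1 := by
    intro h
    rw [hζ, Complex.exp_eq_one_iff] at h
    obtain ⟨k, hk⟩ := h
    have hk' : (θ : ℂ) * Complex.I = ((k : ℂ) * (2 * (Real.pi : ℂ))) * Complex.I := by
      rw [hk]; ring
    have : (θ : ℂ) = (k : ℂ) * (2 * (Real.pi : ℂ)) := mul_right_cancel₀ Complex.I_ne_zero hk'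
    have hθk : θ = k * (2 * Real.pi) := by exact_mod_cast this
    have : (j : ℝ) = k * N := by
      rw [hθ] at hθk
      field_simp at hθk
      nlinarith [Real.pi_ne_zero, Real.pi_pos, hθk]
    have hjk : (j : ℤ) = k * N := by exact_mod_cast this
    exact hj (Int.natCast_dvd_natCast.mp ⟨k, by linarith⟩)
  have hζN : ζ ^ N = 1 := by
    rw [hζ, ← Complex.exp_nat_mul]
    have : (N : ℂ) * (θ * Complex.I) = (j : ℤ) * (2 * Real.pi * Complex.I) := by
      rw [hθ]
      push_cast
      have : (N : ℂ) ≠ 0 := Nat.cast_ne_zero.mpr hN.ne'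
      field_simp
    rw [this, Complex.exp_int_mul_two_pi_mul_I]
  have hsum : ∑ n ∈ Finset.Icc 1 N, ζ ^ n = 0 := by
    rw [← Finset.Ico_add_one_right_eq_Icc, Finset.sum_Ico_eq_sum_range]
    simp only [Nat.add_sub_cancel, Nat.succ_sub_one]
    have : ∀ i, ζ ^ (1 + i) = ζ * ζ ^ i := fun i => by rw [pow_add, pow_one]
    rw [Finset.sum_congr rfl (fun i _ => this i), ← Finset.mul_sum, geom_sum_eq hζ1, hζN]
    simp
  have hre : ∀ n : ℕ, (ζ ^ n).re = Real.cos (2 * Real.pi * n * j / N) := by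
    intro n
    rw [hζ, ← Complex.exp_nat_mul]
    have : (n : ℂ) * (θ * Complex.I) = ((2 * Real.pi * n * j / N : ℝ) : ℂ) * Complex.I := by
      rw [hθ]; push_cast; ring
    rw [this, Complex.exp_ofReal_mul_I_re]
  calc ∑ n ∈ Finset.Icc 1 N, Real.cos (2 * Real.pi * n * j / N)
      = (∑ n ∈ Finset.Icc 1 N, ζ ^ n).re := by
        rw [Complex.re_sum]
        exact Finset.sum_congr rfl fun n _ => (hre n).symm
    _ = 0 := by rw [hsum]; simp


end Aux

set_option maxHeartbeats 1000000 in
theorem stmt_9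
    {Ω : Type*} [MeasurableSpace Ω] (P : Measure Ω) [IsProbabilityMeasure P]
    (N l m : ℕ) (hN : 0 < N) (hl : 0 < l) (hlN : l ≤ N - 1) (hNl : N ≠ 2 * l) (hm : 1 ≤ m)
    (hmN : m ≤ N)
    (B : ℕ → Ω → ℝ) (hBmeas : ∀ n, Measurable (B n))
    (hBindep : iIndepFun (fun i : Fin N => B (i.1 + 1)) P)
    (hB1 : ∀ n ∈ Finset.Icc 1 N, P {ω | B n ω = 1} = (m : ENNReal) / N)
    (hB0 : ∀ n ∈ Finset.Icc 1 N, P {ω | B n ω = 0} = 1 - (m : ENNReal) / N)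
    (U : Ω → ℝ)
    (hU : U = fun ω => ∑ n ∈ Finset.Icc 1 N, Real.cos (2 * Real.pi * n * l / N) * B n ω) :
    ∀ K : ℝ, Real.sqrt N / 2 < K →
      (∫ ω, Real.exp ((U ω) ^ 2 / K ^ 2) ∂P)
        ≤ 1 + 8 * Real.exp 1 * N * K ^ 2 / (4 * K ^ 2 - N) ^ 2 := by
  intro K hK
  have hNr : (0:ℝ) < N := Nat.cast_pos.mpr hN
  have hK0 : 0 < K := lt_of_le_of_lt (by positivity) hK
  have hK2 : (N:ℝ) < 4 * K ^ 2 := by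
    have h1 : Real.sqrt N ^ 2 = N := Real.sq_sqrt (Nat.cast_nonneg N)
    nlinarith [Real.sqrt_nonneg (N:ℝ)]
  -- the coefficients
  set c : ℕ → ℝ := fun n => Real.cos (2 * Real.pi * n * l / N) with hc
  have hc1 : ∀ n, |c n| ≤ 1 := fun n => Real.abs_cos_le_one _
  have hcsum : ∑ n ∈ Finset.Icc 1 N, c n = 0 := by
    apply aux_cos_sum N l hN
    intro hdvd
    have := Nat.le_of_dvd hl hdvd
    omega
  have hcsq : ∑ n ∈ Finset.Icc 1 N, (c n) ^ 2 = N / 2 := by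
    have h2 : ∑ n ∈ Finset.Icc 1 N, Real.cos (2 * Real.pi * n * (2 * l) / N) = 0 := by
      have h2' := aux_cos_sum N (2 * l) hN ?_
      · rw [← h2']
        apply Finset.sum_congr rfl
        intro n _
        congr 1
        push_cast
        ring
      rintro ⟨k, hk⟩
      rcases k with _ | _ | k
      · omega
      · omega
      · have : 2 * N ≤ N * (k + 1 + 1) := by nlinarith
        omega
    have h3 : ∀ n : ℕ, (c n) ^ 2 = 1 / 2 + Real.cos (2 * Real.pi * n * (2 * l) / N) / 2 := by
      intro n
      rw [hc]
      rw [Real.cos_sq]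
      congr 2
      push_cast
      ring
    rw [Finset.sum_congr rfl fun n _ => h3 n, Finset.sum_add_distrib, Finset.sum_const,
      Nat.card_Icc, ← Finset.sum_div, h2]
    simp
    ring
  -- probability parameter
  set p : ℝ := (m : ℝ) / N with hp
  have hp0 : 0 ≤ p := by positivity
  have hp1 : p ≤ 1 := by
    rw [hp, div_le_one hNr]
    exact_mod_cast hmN
  -- B is a.e. {0,1}-valued
  have hBae : ∀ n ∈ Finset.Icc 1 N, ∀ᵐ ω ∂P, B n ω = 0 ∨ B n ω = 1 := by
    intro n hn
    set S : Set Ω := {ω | B n ω = 1} with hS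
    set T : Set Ω := {ω | B n ω = 0} with hT
    have hSm : MeasurableSet S := hBmeas n (measurableSet_singleton 1)
    have hTm : MeasurableSet T := hBmeas n (measurableSet_singleton 0)
    have hdisj : Disjoint S T := by
      rw [Set.disjoint_left]
      intro ω hω1 hω0
      simp only [hS, hT, Set.mem_setOf_eq] at hω1 hω0
      norm_num [hω1] at hω0
    have hmle : (m : ENNReal) / N ≤ 1 := by
      rw [ENNReal.div_le_iff (by exact_mod_cast hN.ne') (by simp)]
      simpa using (by exact_mod_cast hmN : (m : ENNReal) ≤ N)
    have hST : P (S ∪ T) = 1 := by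
      rw [measure_union hdisj hTm, hB1 n hn, hB0 n hn, add_tsub_cancel_of_le hmle]
    have hcompl : P (S ∪ T)ᶜ = 0 := by
      rw [measure_compl (hSm.union hTm) (measure_ne_top _ _), hST, measure_univ, tsub_self]
    rw [MeasureTheory.ae_iff]
    apply measure_mono_null _ hcompl
    intro ω hω
    simp only [Set.mem_setOf_eq, not_or] at hω
    simp only [Set.mem_compl_iff, Set.mem_union, hS, hT, Set.mem_setOf_eq]
    tauto
  -- per coordinate mgf
  have hmgf1 : ∀ n ∈ Finset.Icc 1 N, ∀ t : ℝ,
      mgf (fun ω => c n * B n ω) P t = 1 - p + p * Real.exp (t * c n) := by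
    intro n hn t
    set S : Set Ω := {ω | B n ω = 1} with hS
    have hSm : MeasurableSet S := hBmeas n (measurableSet_singleton 1)
    have hSr : (P S).toReal = p := by
      rw [hS, hB1 n hn, ENNReal.toReal_div]
      simp [hp]
    have hae : (fun ω => Real.exp (t * (c n * B n ω)))
        =ᵐ[P] fun ω => S.indicator (fun _ => Real.exp (t * c n) - 1) ω + 1 := by
      filter_upwards [hBae n hn] with ω hω
      rcases hω with h | h
      · have hωS : ω ∉ S := by simp [hS, h]
        simp [h, Set.indicator_of_notMem hωS]
      · have hωS : ω ∈ S := by simp [hS, h]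
        rw [Set.indicator_of_mem hωS]
        rw [h]
        ring_nf
    unfold mgf
    rw [integral_congr_ae hae,
      integral_add ((integrable_const _).indicator hSm) (integrable_const 1),
      integral_indicator_const _ hSm]
    simp [measureReal_def, hSr]
    ring
  -- Fin N reindexing
  have hfin : ∀ f : ℕ → ℝ, ∑ i : Fin N, f (i.1 + 1) = ∑ n ∈ Finset.Icc 1 N, f n := by
    intro f
    rw [← Finset.Ico_add_one_right_eq_Icc, Finset.sum_Ico_eq_sum_range]
    simp only [Nat.add_sub_cancel]
    rw [← Fin.sum_univ_eq_sum_range (fun i => f (1 + i)) N]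
    exact Finset.sum_congr rfl fun i _ => by rw [add_comm]
  -- U as a sum of the Fin N family
  set Y : Fin N → Ω → ℝ := fun i ω => c (i.1 + 1) * B (i.1 + 1) ω with hY
  have hYmeas : ∀ i, Measurable (Y i) := fun i => (hBmeas _).const_mul _
  have hUY : U = ∑ i : Fin N, Y i := by
    rw [hU]
    funext ω
    rw [Finset.sum_apply]
    exact (hfin (fun n => c n * B n ω)).symm
  have hYindep : iIndepFun Y P := by
    have := hBindep.comp (fun i (x : ℝ) => c (i.1 + 1) * x)
      (fun i => measurable_id.const_mul _)
    exact this
  -- mgf bound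
  have hmgfU : ∀ t : ℝ, mgf U P t ≤ Real.exp (t ^ 2 * N / 16) := by
    intro t
    have hsum : mgf U P t = ∏ i : Fin N, mgf (Y i) P t := by
      rw [hUY]
      exact hYindep.mgf_sum hYmeas Finset.univ
    have hmem : ∀ i : Fin N, i.1 + 1 ∈ Finset.Icc 1 N := fun i => by
      simp only [Finset.mem_Icc]
      omega
    rw [hsum]
    calc ∏ i : Fin N, mgf (Y i) P t
        = ∏ i : Fin N, (1 - p + p * Real.exp (t * c (i.1 + 1))) :=
          Finset.prod_congr rfl fun i _ => hmgf1 _ (hmem i) t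
      _ ≤ ∏ i : Fin N, Real.exp (p * (t * c (i.1 + 1)) + (t * c (i.1 + 1)) ^ 2 / 8) := by
          apply Finset.prod_le_prod
          · intro i _
            have := mul_nonneg hp0 (Real.exp_pos (t * c (i.1 + 1))).le
            linarith
          · intro i _
            exact aux_hoeffding p hp0 hp1 _
      _ = Real.exp (∑ i : Fin N, (p * (t * c (i.1 + 1)) + (t * c (i.1 + 1)) ^ 2 / 8)) :=
          (Real.exp_sum _ _).symm
      _ ≤ Real.exp (t ^ 2 * N / 16) := by
          apply Real.exp_le_exp.mpr
          have e1 : ∑ i : Fin N, (p * (t * c (i.1 + 1)) + (t * c (i.1 + 1)) ^ 2 / 8)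
              = ∑ i : Fin N, (fun n => p * (t * c n) + (t * c n) ^ 2 / 8) (i.1 + 1) := rfl
          rw [e1, hfin (fun n => p * (t * c n) + (t * c n) ^ 2 / 8)]
          have e2 : ∑ n ∈ Finset.Icc 1 N, (p * (t * c n) + (t * c n) ^ 2 / 8)
              = p * t * (∑ n ∈ Finset.Icc 1 N, c n)
                + t ^ 2 * (∑ n ∈ Finset.Icc 1 N, (c n) ^ 2) / 8 := by
            rw [Finset.sum_add_distrib]
            congr 1
            · rw [Finset.mul_sum]
              exact Finset.sum_congr rfl fun n _ => by ring
            · rw [← Finset.sum_div]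
              congr 1
              rw [Finset.mul_sum]
              exact Finset.sum_congr rfl fun n _ => by ring
          rw [e2, hcsum, hcsq]
          apply le_of_eq
          ring
  -- measurability and integrability
  have hUmeas : Measurable U := by
    rw [hU]
    exact Finset.measurable_sum _ fun n _ => (hBmeas n).const_mul _
  have hUb : ∀ᵐ ω ∂P, |U ω| ≤ N := by
    have hall : ∀ᵐ ω ∂P, ∀ n ∈ Finset.Icc 1 N, B n ω = 0 ∨ B n ω = 1 :=
      (MeasureTheory.ae_ball_iff (Finset.Icc 1 N).countable_toSet).mpr hBae
    filter_upwards [hall] with ω hω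
    rw [hU]
    calc |∑ n ∈ Finset.Icc 1 N, c n * B n ω| ≤ ∑ n ∈ Finset.Icc 1 N, |c n * B n ω| :=
          Finset.abs_sum_le_sum_abs _ _
      _ ≤ ∑ n ∈ Finset.Icc 1 N, 1 := by
          apply Finset.sum_le_sum
          intro n hn
          rw [abs_mul]
          rcases hω n hn with h | h
          · rw [h]; simp
          · rw [h]; simpa using hc1 n
      _ = N := by simp [Nat.card_Icc]
  have hInt : ∀ t : ℝ, Integrable (fun ω => Real.exp (t * U ω)) P := by
    intro t
    apply MeasureTheory.Integrable.mono' (integrable_const (Real.exp (|t| * N)))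
    · exact ((hUmeas.const_mul t).exp).aestronglyMeasurable
    · filter_upwards [hUb] with ω hω
      rw [Real.norm_eq_abs, Real.abs_exp, Real.exp_le_exp]
      calc t * U ω ≤ |t * U ω| := le_abs_self _
        _ = |t| * |U ω| := abs_mul _ _
        _ ≤ |t| * N := by
            apply mul_le_mul_of_nonneg_left hω (abs_nonneg t)
  -- Chernoff bounds
  have hChernoff : ∀ X : Ω → ℝ, (∀ t : ℝ, mgf X P t ≤ Real.exp (t ^ 2 * N / 16)) →
      (∀ t : ℝ, Integrable (fun ω => Real.exp (t * X ω)) P) →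
      ∀ s : ℝ, 0 ≤ s → P {ω | s ≤ X ω} ≤ ENNReal.ofReal (Real.exp (-(4 * s ^ 2 / N))) := by
    intro X hmgfX hIntX s hs
    have ht : (0:ℝ) ≤ 8 * s / N := by positivity
    have h1 := measure_ge_le_exp_mul_mgf (X := X) (μ := P) s ht (hIntX _)
    rw [ENNReal.le_ofReal_iff_toReal_le (measure_ne_top _ _) (Real.exp_nonneg _)]
    calc (P {ω | s ≤ X ω}).toReal ≤ Real.exp (-(8 * s / N) * s) * mgf X P (8 * s / N) := h1
      _ ≤ Real.exp (-(8 * s / N) * s) * Real.exp ((8 * s / N) ^ 2 * N / 16) := by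
          apply mul_le_mul_of_nonneg_left (hmgfX _) (Real.exp_nonneg _)
      _ = Real.exp (-(4 * s ^ 2 / N)) := by
          rw [← Real.exp_add]
          congr 1
          field_simp
          ring
  have hmgfnegU : ∀ t : ℝ, mgf (fun ω => -U ω) P t ≤ Real.exp (t ^ 2 * N / 16) := by
    intro t
    have : mgf (fun ω => -U ω) P t = mgf U P (-t) := by
      unfold mgf
      congr 1
      funext ω
      ring_nf
    rw [this]
    calc mgf U P (-t) ≤ Real.exp ((-t) ^ 2 * N / 16) := hmgfU _
      _ = Real.exp (t ^ 2 * N / 16) := by ring_nf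
  have hIntnegU : ∀ t : ℝ, Integrable (fun ω => Real.exp (t * (-U ω))) P := by
    intro t
    have : (fun ω => Real.exp (t * (-U ω))) = fun ω => Real.exp ((-t) * U ω) := by
      funext ω; ring_nf
    rw [this]
    exact hInt (-t)
  -- the tail bound for the function of interest
  set α : ℝ := 4 * K ^ 2 / N with hα
  have hα1 : 1 < α := by
    rw [hα, lt_div_iff₀ hNr]
    linarith
  set f : Ω → ℝ := fun ω => Real.exp ((U ω) ^ 2 / K ^ 2) with hf
  have htail : ∀ t : ℝ, 1 < t → P {ω | t < f ω} ≤ ENNReal.ofReal (2 * t ^ (-α)) := by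
    intro t ht
    have ht0 : (0:ℝ) < t := by linarith
    have hlogt : 0 ≤ Real.log t := Real.log_nonneg ht.le
    set s : ℝ := K * Real.sqrt (Real.log t) with hsdef
    have hs0 : 0 ≤ s := by positivity
    have hssq : s ^ 2 = K ^ 2 * Real.log t := by
      rw [hsdef, mul_pow, Real.sq_sqrt hlogt]
    have hsub : {ω | t < f ω} ⊆ {ω | s ≤ U ω} ∪ {ω | s ≤ -U ω} := by
      intro ω hω
      simp only [Set.mem_setOf_eq, hf] at hω
      have h1 : Real.log t < (U ω) ^ 2 / K ^ 2 := (Real.log_lt_iff_lt_exp ht0).mpr hω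
      have h2 : s ^ 2 ≤ (U ω) ^ 2 := by
        rw [hssq]
        rw [lt_div_iff₀ (by positivity)] at h1
        nlinarith
      have h3 : s ≤ |U ω| := by
        nlinarith [abs_nonneg (U ω), sq_abs (U ω)]
      rcases le_abs.mp h3 with h | h
      · exact Or.inl h
      · exact Or.inr h
    calc P {ω | t < f ω} ≤ P ({ω | s ≤ U ω} ∪ {ω | s ≤ -U ω}) := measure_mono hsub
      _ ≤ P {ω | s ≤ U ω} + P {ω | s ≤ -U ω} := measure_union_le _ _
      _ ≤ ENNReal.ofReal (Real.exp (-(4 * s ^ 2 / N)))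
          + ENNReal.ofReal (Real.exp (-(4 * s ^ 2 / N))) :=
          add_le_add (hChernoff U hmgfU hInt s hs0)
            (hChernoff (fun ω => -U ω) hmgfnegU hIntnegU s hs0)
      _ = ENNReal.ofReal (2 * t ^ (-α)) := by
          rw [← ENNReal.ofReal_add (Real.exp_nonneg _) (Real.exp_nonneg _)]
          congr 1
          have hrw : Real.exp (-(4 * s ^ 2 / N)) = t ^ (-α) := by
            have harg : Real.log t * (-α) = -(4 * s ^ 2 / N) := by
              rw [hssq, hα]
              ring
            rw [Real.rpow_def_of_pos ht0, harg]
          rw [hrw]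
          ring
  -- layer cake
  have hfmeas : Measurable f := ((hUmeas.pow_const 2).div_const _).exp
  have hkey : (∫ ω, f ω ∂P) ≤ 1 + 2 * N / (4 * K ^ 2 - N) := by
    have hnn : 0 ≤ᵐ[P] f := ae_of_all _ fun ω => (Real.exp_pos _).le
    have hDpos : (0:ℝ) < 4 * K ^ 2 - N := by linarith
    have hqnn : (0:ℝ) ≤ 2 * N / (4 * K ^ 2 - N) := by positivity
    rw [integral_eq_lintegral_of_nonneg_ae hnn hfmeas.aestronglyMeasurable,
      MeasureTheory.lintegral_eq_lintegral_meas_lt P hnn hfmeas.aemeasurable]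
    have hsplit : (Set.Ioi (0:ℝ)) = Set.Ioc 0 1 ∪ Set.Ioi 1 :=
      (Set.Ioc_union_Ioi_eq_Ioi zero_le_one).symm
    rw [hsplit, lintegral_union measurableSet_Ioi (Set.Ioc_disjoint_Ioi le_rfl)]
    have hpart1 : ∫⁻ t in Set.Ioc (0:ℝ) 1, P {a | t < f a} ≤ 1 := by
      calc ∫⁻ t in Set.Ioc (0:ℝ) 1, P {a | t < f a}
          ≤ ∫⁻ _ in Set.Ioc (0:ℝ) 1, 1 := lintegral_mono fun t => prob_le_one
        _ = 1 := by
            rw [MeasureTheory.setLIntegral_one, Real.volume_Ioc]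
            simp
    have hIntg : IntegrableOn (fun t : ℝ => 2 * t ^ (-α)) (Set.Ioi 1) := by
      have h := integrableOn_Ioi_rpow_of_lt (by linarith : -α < -1) (zero_lt_one)
      exact h.const_mul 2
    have hval : ∫ t in Set.Ioi (1:ℝ), 2 * t ^ (-α) = 2 * N / (4 * K ^ 2 - N) := by
      rw [MeasureTheory.integral_const_mul, integral_Ioi_rpow_of_lt (by linarith) zero_lt_one,
        Real.one_rpow, hα]
      have hlt : (N:ℝ) - K ^ 2 * 4 < 0 := by nlinarith
      field_simp [hlt.ne]
      have hDD : ((N:ℝ) - K ^ 2 * 4) * ((N:ℝ) - K ^ 2 * 4)⁻¹ = 1 := mul_inv_cancel₀ hlt.ne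
      have hneg : -(4 * K ^ 2) + (N:ℝ) = -(4 * K ^ 2 - N) := by ring
      rw [hneg, div_neg, neg_neg, div_self hDpos.ne']
    have hpart2 : ∫⁻ t in Set.Ioi (1:ℝ), P {a | t < f a}
        ≤ ENNReal.ofReal (2 * N / (4 * K ^ 2 - N)) := by
      calc ∫⁻ t in Set.Ioi (1:ℝ), P {a | t < f a}
          ≤ ∫⁻ t in Set.Ioi (1:ℝ), ENNReal.ofReal (2 * t ^ (-α)) :=
            setLIntegral_mono' measurableSet_Ioi fun t ht => htail t ht
        _ = ENNReal.ofReal (∫ t in Set.Ioi (1:ℝ), 2 * t ^ (-α)) := by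
            rw [← MeasureTheory.ofReal_integral_eq_lintegral_ofReal hIntg
              ((ae_restrict_iff' measurableSet_Ioi).mpr (ae_of_all _ fun t ht => by
                have : (0:ℝ) < t := lt_trans zero_lt_one ht
                positivity))]
        _ = ENNReal.ofReal (2 * N / (4 * K ^ 2 - N)) := by rw [hval]
    have hle : (∫⁻ t in Set.Ioc (0:ℝ) 1, P {a | t < f a})
        + (∫⁻ t in Set.Ioi (1:ℝ), P {a | t < f a})
        ≤ 1 + ENNReal.ofReal (2 * N / (4 * K ^ 2 - N)) := add_le_add hpart1 hpart2
    calc ((∫⁻ t in Set.Ioc (0:ℝ) 1, P {a | t < f a})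
          + (∫⁻ t in Set.Ioi (1:ℝ), P {a | t < f a})).toReal
        ≤ ((1:ENNReal) + ENNReal.ofReal (2 * N / (4 * K ^ 2 - N))).toReal :=
          ENNReal.toReal_mono (by finiteness) hle
      _ = 1 + 2 * N / (4 * K ^ 2 - N) := by
          rw [ENNReal.toReal_add ENNReal.one_ne_top ENNReal.ofReal_ne_top,
            ENNReal.toReal_one, ENNReal.toReal_ofReal hqnn]
  calc (∫ ω, Real.exp ((U ω) ^ 2 / K ^ 2) ∂P) ≤ 1 + 2 * N / (4 * K ^ 2 - N) := hkey
    _ ≤ 1 + 8 * Real.exp 1 * N * K ^ 2 / (4 * K ^ 2 - N) ^ 2 := by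
        have hD : (0:ℝ) < 4 * K ^ 2 - N := by linarith
        have he : (2:ℝ) ≤ Real.exp 1 := by
          have := Real.add_one_le_exp 1
          linarith
        have h3 : 4 * K ^ 2 - (N:ℝ) ≤ 4 * Real.exp 1 * K ^ 2 := by nlinarith [sq_nonneg K]
        have h4 : 2 * (N:ℝ) / (4 * K ^ 2 - N) ≤ 8 * Real.exp 1 * N * K ^ 2 / (4 * K ^ 2 - N) ^ 2 := by
          rw [div_le_div_iff₀ hD (by positivity)]
          nlinarith [mul_le_mul_of_nonneg_left h3
            (by positivity : (0:ℝ) ≤ 2 * N * (4 * K ^ 2 - N)), mul_pos hNr hD]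
        linarith
end

section
/- Let N, l, m be positive integers with l ≤ N − 1, N ≠ 2l and 1 ≤ m ≤ N. Then for every integer n ≥ 1, the 2n-th moment of Ũ_l(m,N) satisfies E[(Ũ_l(m,N))^{2n}] ≤ n^{n+1}·N^n / (2^{2n−1}·e^{n−1}). -/
open MeasureTheory ProbabilityTheory Finset

lemma bernoulli_mgf_bound {p : ℝ} (hp0 : 0 ≤ p) (hp1 : p ≤ 1) (s : ℝ) :
    (1 - p) + p * Real.exp s ≤ Real.exp (p * s + s ^ 2 / 8) := by
  rcases eq_or_lt_of_le hp0 with h0 | hp0'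
  · rw [← h0]
    simpa using Real.one_le_exp (by nlinarith [sq_nonneg s] : (0:ℝ) ≤ 0 * s + s ^ 2 / 8)
  set q : ℝ := 1 - p with hq
  have hq0 : 0 ≤ q := by rw [hq]; linarith
  clear_value q
  have hD : ∀ s : ℝ, 0 < q + p * Real.exp s := fun s => by
    have := Real.exp_pos s; nlinarith
  set F : ℝ → ℝ := fun s => p * s + s ^ 2 / 8 - Real.log (q + p * Real.exp s) with hF
  set F' : ℝ → ℝ := fun s => p + s / 4 - p * Real.exp s / (q + p * Real.exp s) with hF'
  have hDD : ∀ s : ℝ, HasDerivAt (fun s => q + p * Real.exp s) (p * Real.exp s) s := by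
    intro s
    simpa using ((Real.hasDerivAt_exp s).const_mul p).const_add q
  have hdF : ∀ s : ℝ, HasDerivAt F (F' s) s := by
    intro s
    have h1 : HasDerivAt (fun s : ℝ => p * s + s ^ 2 / 8) (p + s / 4) s := by
      have := ((hasDerivAt_id s).const_mul p).add
        (((hasDerivAt_pow 2 s)).div_const 8)
      exact this.congr_deriv (by norm_num; ring)
    have h2 : HasDerivAt (fun s => Real.log (q + p * Real.exp s))
        (p * Real.exp s / (q + p * Real.exp s)) s :=
      (hDD s).log (hD s).ne'
    exact h1.sub h2
  have hdF' : ∀ s : ℝ, HasDerivAt F'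
      (1 / 4 - p * Real.exp s * q / (q + p * Real.exp s) ^ 2) s := by
    intro s
    have h1 : HasDerivAt (fun s : ℝ => p + s / 4) (1 / 4) s := by
      simpa using ((hasDerivAt_id s).div_const 4).const_add p
    have h2 : HasDerivAt (fun s => p * Real.exp s / (q + p * Real.exp s))
        ((p * Real.exp s * (q + p * Real.exp s) - p * Real.exp s * (p * Real.exp s))
          / (q + p * Real.exp s) ^ 2) s := by
      exact ((Real.hasDerivAt_exp s).const_mul p).div (hDD s) (hD s).ne'
    have h3 := h1.sub h2
    rw [hF']
    exact h3.congr_deriv (by field_simp; ring)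
  have hF'' : ∀ s : ℝ, 0 ≤ 1 / 4 - p * Real.exp s * q / (q + p * Real.exp s) ^ 2 := by
    intro s
    rw [sub_nonneg, div_le_iff₀ (by positivity)]
    nlinarith [sq_nonneg (q - p * Real.exp s), Real.exp_pos s, sq_nonneg (q + p * Real.exp s)]
  have hF'mono : Monotone F' := by
    apply monotone_of_deriv_nonneg
    · exact fun s => (hdF' s).differentiableAt
    · intro s; rw [(hdF' s).deriv]; exact hF'' s
  have hF'0 : F' 0 = 0 := by
    rw [hF']; simp [hq]
  have hFc : Continuous F :=
    Differentiable.continuous (fun s => (hdF s).differentiableAt)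
  have hF0 : F 0 = 0 := by rw [hF]; simp [hq]
  have key : ∀ s : ℝ, 0 ≤ F s := by
    intro s
    rcases le_total 0 s with hs | hs
    · have hmono : MonotoneOn F (Set.Ici 0) := by
        apply monotoneOn_of_deriv_nonneg (convex_Ici 0) hFc.continuousOn
        · intro x hx; exact (hdF x).differentiableAt.differentiableWithinAt
        · intro x hx
          rw [(hdF x).deriv, ← hF'0]
          exact hF'mono (le_of_lt (by simpa using hx))
      have := hmono (Set.self_mem_Ici) hs hs
      rwa [hF0] at this
    · have hanti : AntitoneOn F (Set.Iic 0) := by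
        apply antitoneOn_of_deriv_nonpos (convex_Iic 0) hFc.continuousOn
        · intro x hx; exact (hdF x).differentiableAt.differentiableWithinAt
        · intro x hx
          rw [(hdF x).deriv, ← hF'0]
          exact hF'mono (le_of_lt (by simpa using hx))
      have := hanti hs (Set.self_mem_Iic) hs
      rwa [hF0] at this
  have hks : 0 ≤ p * s + s ^ 2 / 8 - Real.log (q + p * Real.exp s) := by
    have := key s; rw [hF] at this; exact this
  have hlog : Real.log (q + p * Real.exp s) ≤ p * s + s ^ 2 / 8 := by linarith
  calc q + p * Real.exp s = Real.exp (Real.log (q + p * Real.exp s)) :=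
        (Real.exp_log (hD s)).symm
    _ ≤ Real.exp (p * s + s ^ 2 / 8) := Real.exp_le_exp.mpr hlog

lemma cos_sum_eq_zero (N k : ℕ) (hN : 0 < N) (hk : ¬ ((N:ℤ) ∣ (k:ℤ))) :
    ∑ i ∈ Finset.Icc 1 N, Real.cos (2 * Real.pi * i * k / N) = 0 := by
  have hNne : (N:ℝ) ≠ 0 := Nat.cast_ne_zero.mpr hN.ne'
  set θ : ℝ := 2 * Real.pi * k / N with hθ
  set z : ℂ := Complex.exp (θ * Complex.I) with hz
  have hzi : ∀ i : ℕ, z ^ i = Complex.exp ((i * θ : ℝ) * Complex.I) := by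
    intro i
    rw [hz, ← Complex.exp_nat_mul]
    congr 1
    push_cast
    ring
  have hNθ : (N:ℝ) * θ = 2 * Real.pi * k := by
    rw [hθ]; field_simp
  have hzN : z ^ N = 1 := by
    rw [hzi N]
    have h2 : ((N * θ : ℝ) : ℂ) * Complex.I = (k : ℤ) * (2 * Real.pi * Complex.I) := by
      rw [hNθ]
      push_cast
      ring
    rw [h2, Complex.exp_int_mul_two_pi_mul_I]
  have hz1 : z ≠ 1 := by
    intro h
    rw [hz, Complex.exp_eq_one_iff] at h
    obtain ⟨n, hn⟩ := h
    apply hk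
    have hI : (θ:ℂ) * Complex.I = ((n:ℂ) * (2 * Real.pi)) * Complex.I := by
      rw [hn]; ring
    have hC : (θ:ℂ) = (n:ℂ) * (2 * Real.pi) := mul_right_cancel₀ Complex.I_ne_zero hI
    have hR : θ = n * (2 * Real.pi) := by exact_mod_cast hC
    rw [hθ, div_eq_iff hNne] at hR
    have hk2 : 2 * Real.pi * (k:ℝ) = 2 * Real.pi * ((N:ℝ) * n) := by
      rw [hR]; ring
    have hcast : (k:ℝ) = (N:ℝ) * (n:ℝ) :=
      mul_left_cancel₀ (by positivity) hk2
    refine ⟨n, ?_⟩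
    exact_mod_cast hcast
  have hgeom : ∑ i ∈ Finset.range N, z ^ i = 0 := by
    have := geom_sum_eq hz1 N
    rw [this, hzN]
    simp
  have hIcc : ∑ i ∈ Finset.Icc 1 N, z ^ i = 0 := by
    rw [← Finset.Ico_add_one_right_eq_Icc, Finset.sum_Ico_eq_sum_range]
    norm_num
    have h3 : ∀ i ∈ Finset.range N, z ^ (1 + i) = z * z ^ i := by
      intro i _
      rw [pow_add, pow_one]
    rw [Finset.sum_congr rfl h3, ← Finset.mul_sum, hgeom, mul_zero]
  have hre : ∀ i : ℕ, Real.cos (2 * Real.pi * i * k / N) = (z ^ i).re := by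
    intro i
    rw [hzi i, Complex.exp_ofReal_mul_I_re]
    congr 1
    rw [hθ]
    ring
  calc ∑ i ∈ Finset.Icc 1 N, Real.cos (2 * Real.pi * i * k / N)
      = ∑ i ∈ Finset.Icc 1 N, (z ^ i).re := Finset.sum_congr rfl (fun i _ => hre i)
    _ = (∑ i ∈ Finset.Icc 1 N, z ^ i).re := by rw [Complex.re_sum]
    _ = 0 := by rw [hIcc]; simp

lemma bern_exp_integral {Ω : Type*} [MeasurableSpace Ω] (P : Measure Ω) [IsProbabilityMeasure P]
    (X : Ω → ℝ) (hX : Measurable X) (p : ENNReal) (hp : p ≤ 1)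
    (h1 : P {ω | X ω = 1} = p) (h0 : P {ω | X ω = 0} = 1 - p) (c : ℝ) :
    ∫ ω, Real.exp (c * X ω) ∂P = (1 - p.toReal) + p.toReal * Real.exp c := by
  have hpne : p ≠ ⊤ := (lt_of_le_of_lt hp ENNReal.one_lt_top).ne
  set A1 : Set Ω := {ω | X ω = 1} with hA1
  set A0 : Set Ω := {ω | X ω = 0} with hA0
  have hmA1 : MeasurableSet A1 := hX (measurableSet_singleton 1)
  have hmA0 : MeasurableSet A0 := hX (measurableSet_singleton 0)
  have hdisj : Disjoint A0 A1 := by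
    rw [Set.disjoint_left]
    intro ω hω0 hω1
    rw [hA0] at hω0; rw [hA1] at hω1
    simp only [Set.mem_setOf_eq] at hω0 hω1
    rw [hω0] at hω1; norm_num at hω1
  have hunion : P (A0 ∪ A1) = 1 := by
    rw [measure_union hdisj hmA1, h0, h1, tsub_add_cancel_of_le hp]
  have hcompl : P (A0 ∪ A1)ᶜ = 0 := by
    rw [measure_compl (hmA0.union hmA1) (measure_ne_top _ _), hunion, measure_univ, tsub_self]
  set g : Ω → ℝ := fun ω => A0.indicator (fun _ => (1:ℝ)) ω + A1.indicator (fun _ => Real.exp c) ω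
    with hg
  have hae : (fun ω => Real.exp (c * X ω)) =ᵐ[P] g := by
    rw [Filter.EventuallyEq, ae_iff]
    apply measure_mono_null _ hcompl
    intro ω hω
    simp only [Set.mem_setOf_eq] at hω
    simp only [Set.mem_compl_iff, Set.mem_union]
    intro hmem
    apply hω
    rcases hmem with h | h
    · have hx : X ω = 0 := h
      rw [hg]
      simp only [Set.indicator_apply]
      rw [if_pos h, if_neg (Set.disjoint_left.mp hdisj h)]
      rw [hx]; simp
    · have hx : X ω = 1 := h
      rw [hg]
      simp only [Set.indicator_apply]
      rw [if_neg (Set.disjoint_right.mp hdisj h), if_pos h]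
      rw [hx]; simp
  rw [integral_congr_ae hae, hg]
  rw [integral_add ((integrable_const (1:ℝ)).indicator hmA0)
    ((integrable_const (Real.exp c)).indicator hmA1)]
  rw [integral_indicator_const _ hmA0, integral_indicator_const _ hmA1, measureReal_def, measureReal_def, h0, h1]
  rw [ENNReal.toReal_sub_of_le hp ENNReal.one_ne_top]
  simp [smul_eq_mul]

lemma bern_ae_01 {Ω : Type*} [MeasurableSpace Ω] (P : Measure Ω) [IsProbabilityMeasure P]
    (X : Ω → ℝ) (hX : Measurable X) (p : ENNReal) (hp : p ≤ 1)
    (h1 : P {ω | X ω = 1} = p) (h0 : P {ω | X ω = 0} = 1 - p) :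
    ∀ᵐ ω ∂P, X ω = 0 ∨ X ω = 1 := by
  set A1 : Set Ω := {ω | X ω = 1} with hA1
  set A0 : Set Ω := {ω | X ω = 0} with hA0
  have hmA1 : MeasurableSet A1 := hX (measurableSet_singleton 1)
  have hmA0 : MeasurableSet A0 := hX (measurableSet_singleton 0)
  have hdisj : Disjoint A0 A1 := by
    rw [Set.disjoint_left]
    intro ω hω0 hω1
    rw [hA0] at hω0; rw [hA1] at hω1
    simp only [Set.mem_setOf_eq] at hω0 hω1
    rw [hω0] at hω1; norm_num at hω1
  have hunion : P (A0 ∪ A1) = 1 := by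
    rw [measure_union hdisj hmA1, h0, h1, tsub_add_cancel_of_le hp]
  have hcompl : P (A0 ∪ A1)ᶜ = 0 := by
    rw [measure_compl (hmA0.union hmA1) (measure_ne_top _ _), hunion, measure_univ, tsub_self]
  rw [ae_iff]
  apply measure_mono_null _ hcompl
  intro ω hω
  simp only [Set.mem_setOf_eq] at hω
  simp only [Set.mem_compl_iff, Set.mem_union]
  intro hmem
  apply hω
  rcases hmem with h | h
  · exact Or.inl h
  · exact Or.inr h

lemma integral_prod_of_indep {Ω ι : Type*} [MeasurableSpace Ω] {P : Measure Ω}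
    [IsProbabilityMeasure P] {f : ι → Ω → ℝ}
    (hindep : iIndepFun f P)
    (hmeas : ∀ i, Measurable (f i)) (hnn : ∀ i ω, 0 ≤ f i ω) (s : Finset ι) :
    ∫ ω, ∏ i ∈ s, f i ω ∂P = ∏ i ∈ s, ∫ ω, f i ω ∂P := by
  classical
  induction s using Finset.induction with
  | empty => simp
  | @insert i s hi ih =>
    have hx : IndepFun (f i) (∏ j ∈ s, f j) P :=
      (hindep.indepFun_finsetProd_of_notMem hmeas hi).symm
    have hprodmeas : Measurable (∏ j ∈ s, f j) := by
      rw [show (∏ j ∈ s, f j) = fun ω => ∏ j ∈ s, f j ω from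
        funext fun ω => Finset.prod_apply ω s f]
      exact Finset.measurable_prod s (fun j _ => hmeas j)
    have h2 := hx.integral_mul_eq_mul_integral (hmeas i).aestronglyMeasurable
      hprodmeas.aestronglyMeasurable
    calc ∫ ω, ∏ j ∈ insert i s, f j ω ∂P
        = ∫ ω, (f i * ∏ j ∈ s, f j) ω ∂P := by
          apply integral_congr_ae
          filter_upwards with ω
          simp [Finset.prod_insert hi, Finset.prod_apply]
      _ = (∫ ω, f i ω ∂P) * ∫ ω, (∏ j ∈ s, f j) ω ∂P := h2
      _ = (∫ ω, f i ω ∂P) * ∫ ω, ∏ j ∈ s, f j ω ∂P := by simp [Finset.prod_apply]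
      _ = ∏ j ∈ insert i s, ∫ ω, f j ω ∂P := by rw [ih, Finset.prod_insert hi]

lemma sum_fin_icc {M : Type*} [AddCommMonoid M] (N : ℕ) (g : ℕ → M) :
    ∑ i : Fin N, g (i.1 + 1) = ∑ j ∈ Finset.Icc 1 N, g j := by
  rw [← Finset.Ico_add_one_right_eq_Icc, Finset.sum_Ico_eq_sum_range]
  norm_num
  rw [Fin.sum_univ_eq_sum_range (fun i => g (i + 1))]
  exact Finset.sum_congr rfl fun i _ => by rw [add_comm]

lemma pow_le_exp_aux' (m : ℕ) (hm : 1 ≤ m) (t y : ℝ) (ht : 0 < t) (hy : 0 ≤ y) :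
    y ^ m ≤ ((m : ℝ) / (t * Real.exp 1)) ^ m * Real.exp (t * y) := by
  have hm' : (0:ℝ) < m := by exact_mod_cast hm
  have h1 : t * y / m ≤ Real.exp (t * y / m - 1) := by
    have := Real.add_one_le_exp (t * y / m - 1)
    linarith
  have h2 : (t * y / m) ^ m ≤ Real.exp (t * y - m) := by
    calc (t * y / m) ^ m ≤ Real.exp (t * y / m - 1) ^ m :=
          pow_le_pow_left₀ (by positivity) h1 m
      _ = Real.exp (t * y - m) := by
          rw [← Real.exp_nat_mul]
          congr 1
          field_simp
  have hexp : Real.exp 1 ^ m = Real.exp m := by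
    rw [← Real.exp_nat_mul, mul_one]
  calc y ^ m = (t * y / m) ^ m * ((m:ℝ) / t) ^ m := by
        rw [← mul_pow]
        congr 1
        field_simp
    _ ≤ Real.exp (t * y - m) * ((m:ℝ) / t) ^ m :=
        mul_le_mul_of_nonneg_right h2 (by positivity)
    _ = ((m : ℝ) / (t * Real.exp 1)) ^ m * Real.exp (t * y) := by
        rw [Real.exp_sub, div_pow, div_pow, mul_pow, hexp]
        field_simp

lemma pow_le_exp_aux (n : ℕ) (hn : 1 ≤ n) (t x : ℝ) (ht : 0 < t) :
    x ^ (2 * n) ≤ ((2 * n : ℝ) / (t * Real.exp 1)) ^ (2 * n)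
      * (Real.exp (t * x) + Real.exp (-(t * x))) := by
  have habs : x ^ (2 * n) = |x| ^ (2 * n) := by
    rw [← abs_pow, abs_of_nonneg ((even_two_mul n).pow_nonneg x)]
  have key := pow_le_exp_aux' (2 * n) (by omega) t |x| ht (abs_nonneg x)
  have hcast : ((2 * n : ℕ) : ℝ) = (2 * n : ℝ) := by push_cast; ring
  rw [hcast] at key
  have hcases : Real.exp (t * |x|) ≤ Real.exp (t * x) + Real.exp (-(t * x)) := by
    rcases abs_cases x with ⟨h, _⟩ | ⟨h, _⟩
    · rw [h]; linarith [Real.exp_pos (-(t*x))]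
    · rw [h, mul_neg, ← neg_mul]
      linarith [Real.exp_pos (t*x)]
  calc x ^ (2*n) = |x| ^ (2*n) := habs
    _ ≤ ((2 * n : ℝ) / (t * Real.exp 1)) ^ (2 * n) * Real.exp (t * |x|) := key
    _ ≤ _ := mul_le_mul_of_nonneg_left hcases (by positivity)

lemma final_numeric (n N : ℕ) (hn : 1 ≤ n) (hN : 0 < N) (t : ℝ) (ht : 0 < t)
    (ht2 : t ^ 2 = 16 * n / N) :
    2 * ((2 * n : ℝ) / (t * Real.exp 1)) ^ (2 * n) * Real.exp 1 ^ n
      ≤ (n : ℝ) ^ (n + 1) * (N : ℝ) ^ n / (2 ^ (2 * n - 1) * Real.exp 1 ^ (n - 1)) := by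
  have he : (0:ℝ) < Real.exp 1 := Real.exp_pos 1
  have he1 : (1:ℝ) ≤ Real.exp 1 := by
    have := Real.add_one_le_exp 1; linarith
  revert he he1
  generalize Real.exp 1 = A
  intro he he1
  have hNne : (N:ℝ) ≠ 0 := Nat.cast_ne_zero.mpr hN.ne'
  have hnne : (n:ℝ) ≠ 0 := Nat.cast_ne_zero.mpr (by omega)
  have hn0 : (0:ℝ) < n := by positivity
  have hT : t ^ (2 * n) = (16 * n / N) ^ n := by rw [pow_mul, ht2]
  obtain ⟨k, rfl⟩ : ∃ k, n = k + 1 := ⟨n - 1, by omega⟩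
  have e1 : 2 * (k + 1) - 1 = 2 * k + 1 := by omega
  have e2 : (k + 1) - 1 = k := by omega
  rw [e1, e2]
  have hAne : A ≠ 0 := he.ne'
  have h2ne : (2:ℝ) ≠ 0 := two_ne_zero
  have hLHS : 2 * ((2 * ((k+1:ℕ):ℝ)) / (t * A)) ^ (2 * (k+1)) * A ^ (k+1)
      = 2 * ((k+1:ℕ):ℝ) ^ (k+1) * (N:ℝ) ^ (k+1) / (4 ^ (k+1) * A ^ (k+1)) := by
    rw [div_pow, mul_pow t A (2*(k+1)), hT, div_pow]
    rw [show (16:ℝ) = 2^4 by norm_num, show (4:ℝ) = 2^2 by norm_num]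
    revert h2ne
    generalize (2:ℝ) = c
    intro h2ne
    generalize hK : ((k+1:ℕ):ℝ) = K at hnne ⊢
    field_simp
    ring
  rw [hLHS]
  have hRHS : ((k+1:ℕ):ℝ) ^ ((k+1) + 1) * (N : ℝ) ^ (k+1)
        / (2 ^ (2 * k + 1) * A ^ k)
      = (2 * ((k+1:ℕ):ℝ) ^ (k+1) * (N:ℝ) ^ (k+1) / (4 ^ (k+1) * A ^ (k+1)))
        * (((k+1:ℕ):ℝ) * A) := by
    rw [show (4:ℝ) = 2^2 by norm_num]
    revert h2ne
    generalize (2:ℝ) = c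
    intro h2ne
    generalize hK : ((k+1:ℕ):ℝ) = K at hnne ⊢
    field_simp
    ring
  rw [hRHS]
  apply le_mul_of_one_le_right (by positivity)
  have h1 : (1:ℝ) ≤ ((k+1:ℕ):ℝ) := by exact_mod_cast Nat.one_le_iff_ne_zero.mpr (by omega)
  nlinarith [h1, he1]

theorem stmt_15
    {Ω : Type*} [MeasurableSpace Ω] (P : Measure Ω) [IsProbabilityMeasure P]
    (N l m : ℕ) (hN : 0 < N) (hl : 0 < l) (hlN : l ≤ N - 1) (hNl : N ≠ 2 * l) (hm : 1 ≤ m)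
    (hmN : m ≤ N)
    (B : ℕ → Ω → ℝ) (hBmeas : ∀ n, Measurable (B n))
    (hBindep : iIndepFun (fun i : Fin N => B (i.1 + 1)) P)
    (hB1 : ∀ n ∈ Finset.Icc 1 N, P {ω | B n ω = 1} = (m : ENNReal) / N)
    (hB0 : ∀ n ∈ Finset.Icc 1 N, P {ω | B n ω = 0} = 1 - (m : ENNReal) / N)
    (U : Ω → ℝ)
    (hU : U = fun ω => ∑ n ∈ Finset.Icc 1 N, Real.cos (2 * Real.pi * n * l / N) * B n ω) :
    ∀ n : ℕ, 1 ≤ n →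
      (∫ ω, (U ω) ^ (2 * n) ∂P)
        ≤ (n : ℝ) ^ (n + 1) * (N : ℝ) ^ n / (2 ^ (2 * n - 1) * Real.exp 1 ^ (n - 1)) := by
  intro n hn
  set a : ℕ → ℝ := fun j => Real.cos (2 * Real.pi * j * l / N) with ha
  set p : ℝ := (m:ℝ) / N with hpdef
  have hNpos' : (0:ℝ) < N := by exact_mod_cast hN
  have hlltN : l < N := by omega
  have hNdvdl : ¬ ((N:ℤ) ∣ (l:ℤ)) := by
    intro hdvd
    have h1 : (N:ℤ) ≤ l := Int.le_of_dvd (by exact_mod_cast hl) hdvd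
    have h2 : (l:ℤ) < N := by exact_mod_cast hlltN
    omega
  have hNdvd2l : ¬ ((N:ℤ) ∣ ((2*l : ℕ):ℤ)) := by
    intro hdvd
    rw [Int.natCast_dvd_natCast] at hdvd
    have h1 : N ≤ 2*l := Nat.le_of_dvd (by omega) hdvd
    obtain ⟨c, hc⟩ := hdvd
    have hc2 : c < 2 := by nlinarith
    have hc1 : 1 ≤ c := by nlinarith
    have : c = 1 := by omega
    rw [this, mul_one] at hc
    exact hNl hc.symm
  have hsum0 : ∑ j ∈ Finset.Icc 1 N, a j = 0 := cos_sum_eq_zero N l hN hNdvdl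
  have hsumsq : ∑ j ∈ Finset.Icc 1 N, (a j) ^ 2 = (N:ℝ) / 2 := by
    have h := cos_sum_eq_zero N (2*l) hN hNdvd2l
    have hterm : ∀ j ∈ Finset.Icc 1 N,
        (a j) ^ 2 = 1/2 + Real.cos (2 * Real.pi * j * (2*l : ℕ) / N) / 2 := by
      intro j _
      rw [ha]
      simp only
      rw [Real.cos_sq]
      congr 2
      push_cast
      ring
    rw [Finset.sum_congr rfl hterm, Finset.sum_add_distrib, Finset.sum_const, Nat.card_Icc]
    have : ∑ j ∈ Finset.Icc 1 N, Real.cos (2 * Real.pi * j * (2*l:ℕ) / N) / 2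
        = (∑ j ∈ Finset.Icc 1 N, Real.cos (2 * Real.pi * j * (2*l:ℕ) / N)) / 2 := by
      rw [Finset.sum_div]
    rw [this, h]
    simp [nsmul_eq_mul]
    ring
  have hp0 : 0 ≤ p := by rw [hpdef]; positivity
  have hp1 : p ≤ 1 := by
    rw [hpdef, div_le_one hNpos']
    exact_mod_cast hmN
  have hpE1 : (m : ENNReal) / N ≤ 1 := by
    apply ENNReal.div_le_of_le_mul
    rw [one_mul]
    exact_mod_cast hmN
  have htoReal : ((m : ENNReal) / N).toReal = p := by
    rw [ENNReal.toReal_div, hpdef]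
    simp
  have hUmeas : Measurable U := by
    rw [hU]
    exact Finset.measurable_sum _ (fun j _ => ((hBmeas j).const_mul _))
  have hereindex : ∀ ω, U ω = ∑ i : Fin N, a (i.1+1) * B (i.1+1) ω := by
    intro ω
    rw [hU]
    exact (sum_fin_icc N (fun j => a j * B j ω)).symm
  have hmemIcc : ∀ i : Fin N, i.1 + 1 ∈ Finset.Icc 1 N := by
    intro i
    have := i.2
    exact Finset.mem_Icc.mpr ⟨by omega, by omega⟩
  have hmgf : ∀ t : ℝ, ∫ ω, Real.exp (t * U ω) ∂P ≤ Real.exp (t^2 * N / 16) := by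
    intro t
    set f : Fin N → Ω → ℝ := fun i ω => Real.exp (t * a (i.1+1) * B (i.1+1) ω) with hf
    have hfind : iIndepFun f P := by
      exact hBindep.comp (fun i : Fin N => fun x : ℝ => Real.exp (t * a (i.1+1) * x))
        (fun i => Real.measurable_exp.comp (measurable_id.const_mul _))
    have hfmeas : ∀ i, Measurable (f i) :=
      fun i => Real.measurable_exp.comp ((hBmeas _).const_mul _)
    have hfnn : ∀ i ω, 0 ≤ f i ω := fun i ω => (Real.exp_pos _).le
    have hprod : ∀ ω, Real.exp (t * U ω) = ∏ i : Fin N, f i ω := by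
      intro ω
      have h5 : t * U ω = ∑ i : Fin N, t * a (i.1+1) * B (i.1+1) ω := by
        rw [hereindex ω, Finset.mul_sum]
        exact Finset.sum_congr rfl fun i _ => (mul_assoc _ _ _).symm
      rw [h5, Real.exp_sum]
    calc ∫ ω, Real.exp (t*U ω) ∂P = ∫ ω, ∏ i : Fin N, f i ω ∂P := by
          apply integral_congr_ae
          filter_upwards with ω
          rw [hprod]
      _ = ∏ i : Fin N, ∫ ω, f i ω ∂P := integral_prod_of_indep hfind hfmeas hfnn Finset.univ
      _ = ∏ i : Fin N, ((1 - p) + p * Real.exp (t * a (i.1+1))) := by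
          apply Finset.prod_congr rfl
          intro i _
          have hbint := bern_exp_integral P (B (i.1+1)) (hBmeas _) ((m : ENNReal)/N) hpE1
            (hB1 _ (hmemIcc i)) (hB0 _ (hmemIcc i)) (t * a (i.1+1))
          rw [htoReal] at hbint
          exact hbint
      _ ≤ ∏ i : Fin N, Real.exp (p * (t * a (i.1+1)) + (t * a (i.1+1))^2/8) := by
          apply Finset.prod_le_prod
          · intro i _
            have := Real.exp_pos (t * a (i.1+1))
            nlinarith
          · intro i _
            exact bernoulli_mgf_bound hp0 hp1 (t * a (i.1+1))
      _ = Real.exp (∑ i : Fin N, (p * (t * a (i.1+1)) + (t * a (i.1+1))^2/8)) :=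
          (Real.exp_sum _ _).symm
      _ = Real.exp (t^2 * N / 16) := by
          congr 1
          rw [sum_fin_icc N (fun j => p * (t * a j) + (t * a j)^2/8)]
          rw [Finset.sum_add_distrib]
          have h1 : ∑ j ∈ Finset.Icc 1 N, p * (t * a j)
              = p * t * ∑ j ∈ Finset.Icc 1 N, a j := by
            rw [Finset.mul_sum]
            exact Finset.sum_congr rfl fun j _ => by ring
          have h2 : ∑ j ∈ Finset.Icc 1 N, (t * a j)^2/8
              = t^2/8 * ∑ j ∈ Finset.Icc 1 N, (a j)^2 := by
            rw [Finset.mul_sum]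
            exact Finset.sum_congr rfl fun j _ => by ring
          rw [h1, h2, hsum0, hsumsq]
          ring
  have haeB : ∀ᵐ ω ∂P, ∀ j ∈ Finset.Icc 1 N, (B j ω = 0 ∨ B j ω = 1) := by
    rw [Filter.eventually_all_finset]
    intro j hj
    exact bern_ae_01 P (B j) (hBmeas j) ((m : ENNReal)/N) hpE1 (hB1 j hj) (hB0 j hj)
  have hUbound : ∀ᵐ ω ∂P, |U ω| ≤ N := by
    filter_upwards [haeB] with ω hω
    rw [hU]
    calc |∑ j ∈ Finset.Icc 1 N, a j * B j ω|
        ≤ ∑ j ∈ Finset.Icc 1 N, |a j * B j ω| := Finset.abs_sum_le_sum_abs _ _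
      _ ≤ ∑ _j ∈ Finset.Icc 1 N, (1:ℝ) := by
          apply Finset.sum_le_sum
          intro j hj
          rw [abs_mul]
          have hB : |B j ω| ≤ 1 := by
            rcases hω j hj with h | h <;> rw [h] <;> norm_num
          have hA : |a j| ≤ 1 := Real.abs_cos_le_one _
          nlinarith [abs_nonneg (a j), abs_nonneg (B j ω)]
      _ = N := by simp [Nat.card_Icc]
  have hint : ∀ t : ℝ, Integrable (fun ω => Real.exp (t * U ω)) P := by
    intro t
    apply Integrable.mono' (integrable_const (Real.exp (|t| * N)))
    · exact (Real.measurable_exp.comp (hUmeas.const_mul t)).aestronglyMeasurable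
    · filter_upwards [hUbound] with ω hω
      rw [Real.norm_eq_abs, abs_of_pos (Real.exp_pos _)]
      apply Real.exp_le_exp.mpr
      calc t * U ω ≤ |t * U ω| := le_abs_self _
        _ = |t| * |U ω| := abs_mul _ _
        _ ≤ |t| * N := mul_le_mul_of_nonneg_left hω (abs_nonneg t)
  have hnN : (0:ℝ) < (n:ℝ) / N := div_pos (by exact_mod_cast hn) hNpos'
  set t : ℝ := 4 * Real.sqrt ((n:ℝ)/N) with htdef
  have ht : 0 < t := by
    rw [htdef]
    have := Real.sqrt_pos.mpr hnN
    linarith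
  have ht2 : t ^ 2 = 16 * n / N := by
    rw [htdef, mul_pow, Real.sq_sqrt hnN.le]
    ring
  have harg : t^2 * N / 16 = (n:ℝ) := by
    rw [ht2]
    field_simp
  set K : ℝ := ((2 * n : ℝ) / (t * Real.exp 1)) ^ (2 * n) with hKdef
  have hKnn : 0 ≤ K := by
    rw [hKdef]
    positivity
  have hi1 := hint t
  have hi2 : Integrable (fun ω => Real.exp (-(t * U ω))) P := by
    have := hint (-t)
    simpa [neg_mul] using this
  have hmgf2 : ∫ ω, Real.exp (-(t * U ω)) ∂P ≤ Real.exp (t^2 * N / 16) := by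
    have h := hmgf (-t)
    rw [neg_sq] at h
    have heq : (fun ω => Real.exp (-(t * U ω))) = fun ω => Real.exp (-t * U ω) := by
      funext ω
      rw [neg_mul]
    rw [heq]
    exact h
  calc ∫ ω, (U ω) ^ (2 * n) ∂P
      ≤ ∫ ω, K * (Real.exp (t * U ω) + Real.exp (-(t * U ω))) ∂P := by
        apply integral_mono_of_nonneg
        · filter_upwards with ω
          exact (even_two_mul n).pow_nonneg _
        · exact (hi1.add hi2).const_mul K
        · filter_upwards with ω
          exact pow_le_exp_aux n hn t (U ω) ht
    _ = K * ((∫ ω, Real.exp (t * U ω) ∂P) + ∫ ω, Real.exp (-(t * U ω)) ∂P) := by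
        rw [MeasureTheory.integral_const_mul, integral_add hi1 hi2]
    _ ≤ K * (Real.exp (t^2 * N / 16) + Real.exp (t^2 * N / 16)) := by
        apply mul_le_mul_of_nonneg_left _ hKnn
        exact add_le_add (hmgf t) hmgf2
    _ = 2 * K * Real.exp 1 ^ n := by
        rw [harg, ← Real.exp_nat_mul, mul_one]
        ring
    _ ≤ (n : ℝ) ^ (n + 1) * (N : ℝ) ^ n / (2 ^ (2 * n - 1) * Real.exp 1 ^ (n - 1)) := by
        rw [hKdef]
        exact final_numeric n N hn hN t ht ht2
end
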